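/- Let V be a finite-dimensional complex vector space with a nondegenerate symmetric bilinear form and φ a skew-symmetric endomorphism. For any nonzero eigenvalue λ of φ, the restriction of the bilinear form to E_λ = L_λ ⊕ L_{−λ} is nondegenerate. -/

import Mathlib

/-- Orthogonality of generalized eigenvectors whose eigenvalues do not sum to zero,
for a skew-symmetric endomorphism. -/
lemma ortho_gen_eig {V : Type*} [AddCommGroup V] [Module ℂ V]
    (B : LinearMap.BilinForm ℂ V) (φ : Module.End ℂ V)
    (hskew : ∀ x y, B (φ x) y + B x (φ y) = 0)
    (μ ν : ℂ) (hμν : μ + ν ≠ 0) :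
    ∀ k n m : ℕ, n + m ≤ k → ∀ x y : V,
      ((φ - μ • 1) ^ n) x = 0 → ((φ - ν • 1) ^ m) y = 0 → B x y = 0 := by
  intro k
  induction k with
  | zero =>
    intro n m hnm x y hx hy
    have hn : n = 0 := by omega
    subst hn
    simp only [pow_zero, Module.End.one_apply] at hx
    subst hx; simp
  | succ k ih =>
    intro n m hnm x y hx hy
    cases n with
    | zero =>
      simp only [pow_zero, Module.End.one_apply] at hx
      subst hx; simp
    | succ n' =>
      cases m with
      | zero =>
        simp only [pow_zero, Module.End.one_apply] at hy
        subst hy; simp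
      | succ m' =>
        have hx' : ((φ - μ • 1) ^ n') ((φ - μ • 1) x) = 0 := by
          have : ((φ - μ • 1) ^ n' * (φ - μ • 1)) x = 0 := by
            rw [← pow_succ]; exact hx
          simpa [Module.End.mul_apply] using this
        have hy' : ((φ - ν • 1) ^ m') ((φ - ν • 1) y) = 0 := by
          have : ((φ - ν • 1) ^ m' * (φ - ν • 1)) y = 0 := by
            rw [← pow_succ]; exact hy
          simpa [Module.End.mul_apply] using this
        have h1 : B ((φ - μ • 1) x) y = 0 := ih n' (m' + 1) (by omega) _ _ hx' hy
        have h2 : B x ((φ - ν • 1) y) = 0 := ih (n' + 1) m' (by omega) _ _ hx hy'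
        have hkey : B ((φ - μ • 1) x) y + B x ((φ - ν • 1) y) = -(μ + ν) * B x y := by
          simp only [LinearMap.sub_apply, LinearMap.smul_apply, Module.End.one_apply,
            map_sub, map_smul, smul_eq_mul]
          linear_combination hskew x y
        rw [h1, h2] at hkey
        have hz : (μ + ν) * B x y = 0 := by linear_combination hkey
        rcases mul_eq_zero.mp hz with hc | hc
        · exact absurd hc hμν
        · exact hc

/-- For a skew-symmetric endomorphism of a finite-dimensional complex vector
space with a nondegenerate symmetric bilinear form, and any nonzero eigenvalue `λ`, the
restriction of the form to `E_λ = L_λ ⊕ L_{-λ}` is nondegenerate. -/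
theorem restrict_nondegenerate_on_Elambda
    (V : Type*) [AddCommGroup V] [Module ℂ V] [FiniteDimensional ℂ V]
    (B : LinearMap.BilinForm ℂ V) (hBnd : B.Nondegenerate) (hBsymm : ∀ x y, B x y = B y x)
    (φ : Module.End ℂ V) (hskew : ∀ x y, B (φ x) y + B x (φ y) = 0)
    (L : ℂ → Submodule ℂ V)
    (hL : ∀ μ : ℂ, L μ = LinearMap.ker ((φ - μ • 1) ^ (Module.finrank ℂ V)))
    (lam : ℂ) (hlam : Module.End.HasEigenvalue φ lam) (hne : lam ≠ 0) :
    (B.restrict (L lam ⊔ L (-lam))).Nondegenerate := by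
  -- L μ is the maximal generalized eigenspace
  have hLmax : ∀ μ : ℂ, L μ = φ.maxGenEigenspace μ := by
    intro μ
    rw [hL, Module.End.maxGenEigenspace_eq_genEigenspace_finrank,
      Module.End.genEigenspace_nat]
  set W := L lam ⊔ L (-lam) with hW
  refine (LinearMap.IsRefl.nondegenerate_iff_separatingLeft
    (fun u v huv => by simpa [hBsymm] using huv)).mpr ?_
  rintro ⟨x, hx⟩ h
  -- x decomposes as a + b with a ∈ L lam, b ∈ L (-lam)
  obtain ⟨a, ha, b, hb, hab⟩ := Submodule.mem_sup.mp hx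
  -- x is orthogonal to all of V
  have hall : ∀ z : V, B x z = 0 := by
    have htop : ⨆ μ : ℂ, φ.maxGenEigenspace μ = ⊤ :=
      Module.End.iSup_maxGenEigenspace_eq_top φ
    intro z
    have hz : z ∈ ⨆ μ : ℂ, φ.maxGenEigenspace μ := htop ▸ Submodule.mem_top
    refine Submodule.iSup_induction _ (motive := fun z => B x z = 0) hz ?_ (by simp) ?_
    · intro μ z hzμ
      by_cases hμ : μ = lam ∨ μ = -lam
      · have hzW : z ∈ W := by
          rcases hμ with h1 | h1
          · rw [h1] at hzμ
            exact Submodule.mem_sup_left ((hLmax lam) ▸ hzμ)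
          · rw [h1] at hzμ
            exact Submodule.mem_sup_right ((hLmax (-lam)) ▸ hzμ)
        exact h ⟨z, hzW⟩
      · push_neg at hμ
        obtain ⟨hμ1, hμ2⟩ := hμ
        obtain ⟨k, hk⟩ := (Module.End.mem_maxGenEigenspace φ μ z).mp hzμ
        have ha' : ((φ - lam • 1) ^ Module.finrank ℂ V) a = 0 := by
          have := (hL lam) ▸ ha; exact LinearMap.mem_ker.mp this
        have hb' : ((φ - (-lam) • 1) ^ Module.finrank ℂ V) b = 0 := by
          have := (hL (-lam)) ▸ hb; exact LinearMap.mem_ker.mp this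
        have hBa : B a z = 0 :=
          ortho_gen_eig B φ hskew lam μ
            (fun hc => hμ2 (by linear_combination hc))
            (Module.finrank ℂ V + k) _ _ le_rfl a z ha' hk
        have hBb : B b z = 0 :=
          ortho_gen_eig B φ hskew (-lam) μ
            (fun hc => hμ1 (by linear_combination hc))
            (Module.finrank ℂ V + k) _ _ le_rfl b z hb' hk
        calc B x z = B (a + b) z := by rw [hab]
          _ = B a z + B b z := by simp [map_add]
          _ = 0 := by rw [hBa, hBb, add_zero]
    · intro y1 y2 h1 h2
      rw [map_add, h1, h2, add_zero]
  have : x = 0 := hBnd.1 x hall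
  exact Subtype.ext this
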